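/- Let Q₀ be a nonnegative radial function supported in ℤ_p with Q₀ ∈ L¹(ℚ_p) and ∫_{ℤ_p}Q₀ = 1, and let W₀φ = Q₀ ∗ (fφ) with f(x) = Σ_{I∈G_M} f(I)·Ω(p^M|x−I|_p), f(I) > 0. If Ψ_{rnj} is a Kozyrev wavelet whose support is contained in the ball I+p^Mℤ_p for some I ∈ G_M, then Ψ_{rnj} is an eigenfunction of W₀ with W₀Ψ_{rnj} = Q̂₀(p^{1−r})·f(I)·Ψ_{rnj}. In particular the closed span of the wavelets supported in I+p^Mℤ_p is invariant under W₀. -/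

import Mathlib

open MeasureTheory Filter
open scoped Real Topology ENNReal NNReal

namespace PadicES

variable (p : ℕ) [Fact p.Prime]

noncomputable instance : MeasurableSpace ℚ_[p] := borel _
instance : BorelSpace ℚ_[p] := ⟨rfl⟩
noncomputable instance : DecidableEq ℚ_[p] := Classical.decEq _

/-- The closed unit ball `ℤ_p` viewed as a subset of `ℚ_p`. -/
def unitBall : Set ℚ_[p] := {x : ℚ_[p] | ‖x‖ ≤ 1}

lemma isCompact_unitBall : IsCompact (unitBall p) := by
  have : unitBall p = Metric.closedBall (0 : ℚ_[p]) 1 := by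
    ext x; simp [unitBall, Metric.mem_closedBall, dist_eq_norm]
  rw [this]; exact isCompact_closedBall _ _

lemma interior_unitBall_nonempty : (interior (unitBall p)).Nonempty := by
  have : unitBall p = Metric.closedBall (0 : ℚ_[p]) 1 := by
    ext x; simp [unitBall, Metric.mem_closedBall, dist_eq_norm]
  rw [this, (IsUltrametricDist.isOpen_closedBall (0 : ℚ_[p]) one_ne_zero).interior_eq]
  exact ⟨0, by simp⟩

/-- The Haar measure `dx` on `(ℚ_p, +)`, normalized so that `ℤ_p` has measure `1`. -/
noncomputable def haar : Measure ℚ_[p] :=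
  Measure.addHaarMeasure ⟨⟨unitBall p, isCompact_unitBall p⟩, interior_unitBall_nonempty p⟩

lemma norm_scaled_le_one (y : ℚ_[p]) (h : ¬ ‖y‖ ≤ 1) :
    ‖(p : ℚ_[p]) ^ ((-y.valuation).toNat) * y‖ ≤ 1 := by
  have hy : y ≠ 0 := by rintro rfl; simp at h
  have hv : y.valuation < 0 := by
    by_contra hv
    push_neg at hv
    exact h ((Padic.norm_le_one_iff_val_nonneg (p := p) y).mpr hv)
  have hp0 : (0 : ℝ) < (p : ℝ) := by
    exact_mod_cast (Fact.out : p.Prime).pos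
  rw [norm_mul, norm_pow, Padic.norm_p, Padic.norm_eq_zpow_neg_valuation hy]
  rw [inv_pow, ← zpow_natCast, Int.toNat_of_nonneg (by omega)]
  rw [← zpow_neg, ← zpow_add₀ (ne_of_gt hp0)]
  simp

/-- The `p`-adic fractional part `{y}_p`, as a rational number. -/
noncomputable def fract (y : ℚ_[p]) : ℚ :=
  if h : ‖y‖ ≤ 1 then 0
  else
    ((PadicInt.toZModPow ((-y.valuation).toNat)
        (⟨(p : ℚ_[p]) ^ ((-y.valuation).toNat) * y, norm_scaled_le_one p y h⟩ :
          ℤ_[p])).val : ℚ) / (p : ℚ) ^ ((-y.valuation).toNat)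

/-- The standard additive character `χ_p(y) = exp(2 π i {y}_p)` of `(ℚ_p,+)`. -/
noncomputable def stdChar (y : ℚ_[p]) : ℂ :=
  Complex.exp (2 * (Real.pi : ℂ) * Complex.I * (fract p y : ℂ))

/-- The ball `a + p^R ℤ_p` of radius `p^{-R}` centered at `a`. -/
def ballSet (R : ℤ) (a : ℚ_[p]) : Set ℚ_[p] := {x : ℚ_[p] | ‖x - a‖ ≤ (p : ℝ) ^ (-R)}

/-- `Ω(p^R |x - a|_p)`: the indicator function of the ball `a + p^R ℤ_p` (complex valued). -/
noncomputable def ballInd (R : ℤ) (a x : ℚ_[p]) : ℂ := if ‖x - a‖ ≤ (p : ℝ) ^ (-R) then 1 else 0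

/-- `Ω(p^R |x - a|_p)`: the indicator function of the ball `a + p^R ℤ_p` (real valued). -/
noncomputable def ballIndR (R : ℤ) (a x : ℚ_[p]) : ℝ := if ‖x - a‖ ≤ (p : ℝ) ^ (-R) then 1 else 0

/-- The Kozyrev wavelet
`Ψ_{rnj}(x) = p^{-r/2} χ_p(p^{-1} j (p^r x - n)) Ω(|p^r x - n|_p)`. -/
noncomputable def wavelet (r : ℤ) (n : ℚ_[p]) (j : ℕ) (x : ℚ_[p]) : ℂ :=
  (((p : ℝ) ^ (-(r : ℝ) / 2) : ℝ) : ℂ) *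
    stdChar p ((p : ℚ_[p])⁻¹ * (j : ℚ_[p]) * ((p : ℚ_[p]) ^ r * x - n)) *
    ballInd p 0 0 ((p : ℚ_[p]) ^ r * x - n)

/-- The Fourier transform `ĝ(ξ) = ∫ χ_p(ξ x) g(x) dx` of a complex-valued function. -/
noncomputable def fourierT (g : ℚ_[p] → ℂ) (ξ : ℚ_[p]) : ℂ :=
  ∫ x, stdChar p (ξ * x) * g x ∂(haar p)

/-- A function on `ℚ_p` is radial if it only depends on `|x|_p`. -/
def IsRadial (g : ℚ_[p] → ℝ) : Prop := ∀ x y : ℚ_[p], ‖x‖ = ‖y‖ → g x = g y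

/-- Convolution `(g ∗ φ)(x) = ∫ g(x - y) φ(y) dy` of a real kernel with a complex function. -/
noncomputable def conv (g : ℚ_[p] → ℝ) (φ : ℚ_[p] → ℂ) (x : ℚ_[p]) : ℂ :=
  ∫ y, (g (x - y) : ℂ) * φ y ∂(haar p)

/-- Real-valued convolution. -/
noncomputable def convR (g φ : ℚ_[p] → ℝ) (x : ℚ_[p]) : ℝ :=
  ∫ y, g (x - y) * φ y ∂(haar p)

/-- The fitness function `f(x) = Σ_{I ∈ G_M} f(I) Ω(p^M |x - I|_p)`. -/
noncomputable def fitness (fc : ℚ_[p] → ℝ) (M : ℕ) (G : Finset ℚ_[p]) (x : ℚ_[p]) : ℝ :=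
  ∑ I ∈ G, fc I * ballIndR p M I x

/-- The matrix `W⁰` of the operator `W₀ φ = Q₀ ∗ (f φ)` on the span of the
indicator functions of the balls `I + p^M ℤ_p`, `I ∈ G_M`. -/
noncomputable def Wmat (Q₀ fc : ℚ_[p] → ℝ) (M : ℕ) (G : Finset ℚ_[p]) :
    Matrix {I : ℚ_[p] // I ∈ G} {I : ℚ_[p] // I ∈ G} ℝ :=
  fun I J =>
    if I = J then fc I.1 * ∫ z in ballSet p M 0, Q₀ z ∂(haar p)
    else fc I.1 * Q₀ (J.1 - I.1) * (p : ℝ) ^ (-(M : ℤ))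


/-- The operator `W₀ φ = Q₀ ∗ (f φ)` (complex-valued version). -/
noncomputable def Wop (Q₀ fc : ℚ_[p] → ℝ) (M : ℕ) (G : Finset ℚ_[p]) (φ : ℚ_[p] → ℂ)
    (x : ℚ_[p]) : ℂ :=
  conv p Q₀ (fun y => ((fitness p fc M G y : ℝ) : ℂ) * φ y) x

/-- The operator `W₀ φ = Q₀ ∗ (f φ)` (real-valued version). -/
noncomputable def WopR (Q₀ fc : ℚ_[p] → ℝ) (M : ℕ) (G : Finset ℚ_[p]) (φ : ℚ_[p] → ℝ)
    (x : ℚ_[p]) : ℝ :=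
  convR p Q₀ (fun y => fitness p fc M G y * φ y) x

/-- The `p`-adic heat kernel `Z(ξ; σ, α) = ∫ χ_p(ξ x) e^{-σ |x|_p^α} dx`. -/
noncomputable def heatK (σ α : ℝ) (ξ : ℚ_[p]) : ℂ :=
  ∫ x, stdChar p (ξ * x) * ((Real.exp (-σ * ‖x‖ ^ α) : ℝ) : ℂ) ∂(haar p)


/-! ### Auxiliary lemmas -/

section Aux

variable {p : ℕ} [Fact p.Prime]

lemma pR_pos : (0:ℝ) < (p:ℝ) := by exact_mod_cast (Fact.out : p.Prime).pos

lemma pR_one_lt : (1:ℝ) < (p:ℝ) := by exact_mod_cast (Fact.out : p.Prime).one_lt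

lemma pQ_ne_zero : ((p:ℚ_[p])) ≠ 0 := by
  exact_mod_cast Nat.cast_ne_zero.mpr (Fact.out : p.Prime).ne_zero

lemma fract_of_norm_le_one {y : ℚ_[p]} (h : ‖y‖ ≤ 1) : fract p y = 0 := dif_pos h

lemma fract_den (y : ℚ_[p]) : ∃ (m k : ℕ), fract p y = (m:ℚ) / (p:ℚ)^k := by
  by_cases h : ‖y‖ ≤ 1
  · exact ⟨0, 0, by simp [fract_of_norm_le_one h]⟩
  · exact ⟨_, _, dif_neg h⟩

lemma norm_sub_fract_le (y : ℚ_[p]) : ‖y - ((fract p y : ℚ) : ℚ_[p])‖ ≤ 1 := by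
  by_cases h : ‖y‖ ≤ 1
  · simpa [fract_of_norm_le_one h] using h
  · rw [fract, dif_neg h]
    set k := (-y.valuation).toNat with hk
    set z : ℤ_[p] := ⟨(p : ℚ_[p]) ^ k * y, norm_scaled_le_one p y h⟩ with hz
    set m := ((PadicInt.toZModPow k z).val) with hm
    haveI : NeZero (p ^ k) := ⟨pow_ne_zero k (Fact.out : p.Prime).ne_zero⟩
    have hzm : ‖z - (m : ℤ_[p])‖ ≤ (p:ℝ)^(-(k:ℤ)) := by
      rw [PadicInt.norm_le_pow_iff_mem_span_pow, ← PadicInt.ker_toZModPow, RingHom.mem_ker,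
        map_sub, map_natCast, hm, ZMod.natCast_zmod_val, sub_self]
    have hcoe : ((z - (m : ℤ_[p]) : ℤ_[p]) : ℚ_[p]) = (p : ℚ_[p]) ^ k * y - (m : ℚ_[p]) := by
      push_cast [hz]
      rfl
    have hnorm : ‖(p : ℚ_[p]) ^ k * y - (m : ℚ_[p])‖ ≤ (p:ℝ)^(-(k:ℤ)) := by
      rw [← hcoe]
      rw [← PadicInt.norm_def]
      exact hzm
    have hcast : (((m:ℚ) / (p:ℚ)^k : ℚ) : ℚ_[p]) = (m : ℚ_[p]) / (p : ℚ_[p])^k := by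
      push_cast; ring
    rw [hcast]
    have hrw : y - (m : ℚ_[p]) / (p : ℚ_[p])^k
        = ((p : ℚ_[p]) ^ k * y - (m : ℚ_[p])) / (p : ℚ_[p])^k := by
      rw [sub_div, mul_div_cancel_left₀ _ (pow_ne_zero k pQ_ne_zero)]
    rw [hrw, norm_div]
    have hpk : ‖(p : ℚ_[p])^k‖ = (p:ℝ)^(-(k:ℤ)) := Padic.norm_p_pow k
    rw [hpk]
    have hppos : (0:ℝ) < (p:ℝ)^(-(k:ℤ)) := zpow_pos pR_pos _
    rw [div_le_one hppos]
    exact hnorm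

lemma fract_mem_Ioo {y : ℚ_[p]} (h : ¬ ‖y‖ ≤ 1) : 0 < fract p y ∧ fract p y < 1 := by
  rw [fract, dif_neg h]
  have hy0 : y ≠ 0 := by rintro rfl; simp at h
  have hv : y.valuation < 0 := by
    by_contra hv
    push_neg at hv
    exact h ((Padic.norm_le_one_iff_val_nonneg (p := p) y).mpr hv)
  set k := (-y.valuation).toNat with hk
  have hkv : (k:ℤ) = -y.valuation := Int.toNat_of_nonneg (by omega)
  have hk1 : 1 ≤ k := by omega
  set z : ℤ_[p] := ⟨(p : ℚ_[p]) ^ k * y, norm_scaled_le_one p y h⟩ with hz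
  set m := ((PadicInt.toZModPow k z).val) with hm
  haveI : NeZero (p ^ k) := ⟨pow_ne_zero k (Fact.out : p.Prime).ne_zero⟩
  have hpk1 : (1:ℚ) ≤ (p:ℚ)^k := one_le_pow₀ (by exact_mod_cast (Fact.out : p.Prime).one_le)
  have hpkpos : (0:ℚ) < (p:ℚ)^k := lt_of_lt_of_le one_pos hpk1
  have hznorm : ‖z‖ = 1 := by
    rw [PadicInt.norm_def]
    show ‖(p : ℚ_[p]) ^ k * y‖ = 1
    rw [norm_mul, Padic.norm_p_pow, Padic.norm_eq_zpow_neg_valuation hy0,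
      ← zpow_add₀ (ne_of_gt pR_pos)]
    have he : -(k:ℤ) + -y.valuation = 0 := by omega
    rw [he, zpow_zero]
  have hm0 : m ≠ 0 := by
    intro h0
    have : PadicInt.toZModPow k z = 0 := (ZMod.val_eq_zero _).mp h0
    have hmem : z ∈ RingHom.ker (PadicInt.toZModPow (p := p) k) := this
    rw [PadicInt.ker_toZModPow] at hmem
    have := (PadicInt.norm_le_pow_iff_mem_span_pow z k).mpr hmem
    rw [hznorm] at this
    have hlt : (p:ℝ)^(-(k:ℤ)) < 1 := by
      apply zpow_lt_one_of_neg₀ pR_one_lt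
      omega
    linarith
  have hmlt : m < p ^ k := ZMod.val_lt _
  constructor
  · apply div_pos _ hpkpos
    exact_mod_cast Nat.pos_of_ne_zero hm0
  · rw [div_lt_one hpkpos]
    exact_mod_cast hmlt

lemma stdChar_of_norm_le_one {y : ℚ_[p]} (h : ‖y‖ ≤ 1) : stdChar p y = 1 := by
  simp [stdChar, fract_of_norm_le_one h]

lemma norm_stdChar (y : ℚ_[p]) : ‖stdChar p y‖ = 1 := by
  rw [stdChar, Complex.norm_exp]
  have : (2 * (Real.pi : ℂ) * Complex.I * ((fract p y : ℚ) : ℂ)).re = 0 := by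
    simp [Complex.mul_re, Complex.mul_im]
  rw [this, Real.exp_zero]

lemma stdChar_add (a b : ℚ_[p]) : stdChar p (a + b) = stdChar p a * stdChar p b := by
  obtain ⟨m1, k1, h1⟩ := fract_den (p := p) a
  obtain ⟨m2, k2, h2⟩ := fract_den (p := p) b
  obtain ⟨m3, k3, h3⟩ := fract_den (p := p) (a + b)
  set q1 := fract p a
  set q2 := fract p b
  set q3 := fract p (a + b)
  have hpQ : ((p:ℚ)) ≠ 0 := Nat.cast_ne_zero.mpr (Fact.out : p.Prime).ne_zero
  set N : ℤ := (m1 : ℤ) * (p:ℤ)^(k2 + k3) + (m2 : ℤ) * (p:ℤ)^(k1 + k3)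
      - (m3 : ℤ) * (p:ℤ)^(k1 + k2) with hN
  set K : ℕ := k1 + k2 + k3 with hK
  have hq : q1 + q2 - q3 = (N : ℚ) / (p:ℚ)^K := by
    rw [h1, h2, h3, hN, hK]
    field_simp
    push_cast
    ring
  -- p-adic norm of q1+q2-q3 is at most 1
  have hnorm : ‖((q1 + q2 - q3 : ℚ) : ℚ_[p])‖ ≤ 1 := by
    have e1 := norm_sub_fract_le (p := p) a
    have e2 := norm_sub_fract_le (p := p) b
    have e3 := norm_sub_fract_le (p := p) (a + b)
    have hrw : ((q1 + q2 - q3 : ℚ) : ℚ_[p])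
        = -((a - ((q1 : ℚ) : ℚ_[p])) + (b - ((q2 : ℚ) : ℚ_[p]))
            + -((a + b) - ((q3 : ℚ) : ℚ_[p]))) := by
      push_cast
      ring
    rw [hrw, norm_neg]
    refine le_trans (Padic.nonarchimedean _ _) ?_
    rw [norm_neg]
    exact max_le (le_trans (Padic.nonarchimedean _ _) (max_le e1 e2)) e3
  -- hence N is divisible by p^K
  have hdvd : ((p:ℤ))^K ∣ N := by
    rw [← Padic.norm_int_le_pow_iff_dvd]
    have hcast : ((N : ℚ_[p])) = ((q1 + q2 - q3 : ℚ) : ℚ_[p]) * (p : ℚ_[p])^K := by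
      rw [hq]
      push_cast
      field_simp
      rw [mul_div_cancel_right₀ _ (pow_ne_zero K pQ_ne_zero)]
    rw [hcast, norm_mul, Padic.norm_p_pow]
    calc ‖((q1 + q2 - q3 : ℚ) : ℚ_[p])‖ * (p:ℝ)^(-(K:ℤ))
        ≤ 1 * (p:ℝ)^(-(K:ℤ)) := by
          apply mul_le_mul_of_nonneg_right hnorm
          positivity
      _ = (p:ℝ)^(-(K:ℤ)) := one_mul _
  obtain ⟨t, ht⟩ := hdvd
  have hqt : q1 + q2 = q3 + (t : ℚ) := by
    have : q1 + q2 - q3 = (t : ℚ) := by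
      rw [hq, ht]
      push_cast
      rw [mul_comm, mul_div_assoc, div_self (by positivity : ((p:ℚ))^K ≠ 0), mul_one]
    linarith
  rw [stdChar, stdChar, stdChar, ← Complex.exp_add]
  have harg : 2 * (Real.pi : ℂ) * Complex.I * ((q1 : ℚ) : ℂ)
      + 2 * (Real.pi : ℂ) * Complex.I * ((q2 : ℚ) : ℂ)
      = 2 * (Real.pi : ℂ) * Complex.I * ((q3 : ℚ) : ℂ) + (t : ℂ) * (2 * (Real.pi : ℂ) * Complex.I) := by
    have : ((q1 : ℚ) : ℂ) + ((q2 : ℚ) : ℂ) = ((q3 : ℚ) : ℂ) + (t : ℂ) := by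
      exact_mod_cast congrArg (fun q : ℚ => (q : ℂ)) hqt
    linear_combination (2 * (Real.pi : ℂ) * Complex.I) * this
  rw [harg, Complex.exp_add, Complex.exp_int_mul_two_pi_mul_I, mul_one]

lemma stdChar_ne_one {y : ℚ_[p]} (h : ¬ ‖y‖ ≤ 1) : stdChar p y ≠ 1 := by
  obtain ⟨h0, h1⟩ := fract_mem_Ioo h
  intro hy
  rw [stdChar, Complex.exp_eq_one_iff] at hy
  obtain ⟨n, hn⟩ := hy
  have h2 : (2 * (Real.pi : ℂ) * Complex.I) ≠ 0 := by
    simp [Real.pi_ne_zero, Complex.I_ne_zero]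
  have hqn : ((fract p y : ℚ) : ℂ) = (n : ℂ) := by
    apply mul_left_cancel₀ h2
    rw [hn]
    ring
  have hq : (fract p y : ℚ) = (n : ℚ) := by exact_mod_cast hqn
  rw [hq] at h0 h1
  have : (0:ℤ) < n := by exact_mod_cast h0
  have : (n:ℤ) < 1 := by exact_mod_cast h1
  omega

lemma stdChar_continuous : Continuous (stdChar p) := by
  rw [continuous_iff_continuousAt]
  intro y
  have hev : stdChar p =ᶠ[𝓝 y] (fun _ => stdChar p y) := by
    filter_upwards [Metric.closedBall_mem_nhds y one_pos] with z hz
    have hz1 : ‖z - y‖ ≤ 1 := by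
      rw [← dist_eq_norm]
      exact hz
    have : stdChar p z = stdChar p (y + (z - y)) := by ring_nf
    rw [this, stdChar_add, stdChar_of_norm_le_one hz1, mul_one]
  exact hev.continuousAt

instance : TopologicalSpace.SeparableSpace ℚ_[p] := by
  refine ⟨⟨Set.range ((↑) : ℚ → ℚ_[p]), Set.countable_range _, ?_⟩⟩
  rw [Metric.dense_iff]
  intro x ε hε
  obtain ⟨r, hr⟩ := Padic.rat_dense (p := p) x hε
  exact ⟨r, by rwa [Metric.mem_ball, dist_comm, dist_eq_norm], Set.mem_range_self _⟩

instance : SecondCountableTopology ℚ_[p] :=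
  UniformSpace.secondCountable_of_separable _

/-- The positive compact set used to define `haar`. -/
def K₀ (p : ℕ) [Fact p.Prime] : TopologicalSpace.PositiveCompacts ℚ_[p] :=
  ⟨⟨unitBall p, isCompact_unitBall p⟩, interior_unitBall_nonempty p⟩

instance : (haar p).IsAddHaarMeasure := by
  unfold haar
  exact Measure.isAddHaarMeasure_addHaarMeasure _

lemma measurableSet_unitBall : MeasurableSet (unitBall p) := by
  have : unitBall p = Metric.closedBall (0 : ℚ_[p]) 1 := by
    ext x; simp [unitBall, Metric.mem_closedBall, dist_eq_norm]
  rw [this]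
  exact Metric.isClosed_closedBall.measurableSet

lemma haar_unitBall : haar p (unitBall p) = 1 := by
  unfold haar
  exact Measure.addHaarMeasure_self

lemma measurePreserving_mulLeft {a : ℚ_[p]} (ha : ‖a‖ = 1) :
    MeasurePreserving (fun t : ℚ_[p] => a * t) (haar p) (haar p) := by
  have ha0 : a ≠ 0 := by
    intro h
    rw [h, norm_zero] at ha
    exact one_ne_zero ha.symm
  have hmeas : Measurable fun t : ℚ_[p] => a * t := (continuous_mul_left a).measurable
  refine ⟨hmeas, ?_⟩
  set e : ℚ_[p] ≃+ ℚ_[p] :=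
    AddEquiv.mk' (Homeomorph.mulLeft₀ a ha0).toEquiv (fun x y => mul_add a x y) with he
  have hecoe : ⇑e = fun t : ℚ_[p] => a * t := rfl
  have hesymm : Continuous e.symm := by
    have : ⇑e.symm = fun t : ℚ_[p] => a⁻¹ * t := rfl
    rw [this]
    exact continuous_mul_left _
  haveI : ((haar p).map e).IsAddHaarMeasure :=
    e.isAddHaarMeasure_map (haar p) (by rw [hecoe]; exact continuous_mul_left a) hesymm
  have huniq := Measure.addHaarMeasure_unique ((haar p).map e) (K₀ p)
  have hval : ((haar p).map e) (K₀ p) = 1 := by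
    show ((haar p).map e) (unitBall p) = 1
    rw [hecoe, Measure.map_apply hmeas (measurableSet_unitBall (p := p))]
    have hpre : (fun t : ℚ_[p] => a * t) ⁻¹' (unitBall p) = unitBall p := by
      ext t
      simp only [unitBall, Set.mem_preimage, Set.mem_setOf_eq, norm_mul, ha, one_mul]
    show haar p ((fun t : ℚ_[p] => a * t) ⁻¹' (unitBall p)) = 1
    rw [hpre]
    exact haar_unitBall
  rw [hecoe] at huniq hval
  rw [huniq, hval, one_smul]
  rfl

lemma integral_eq_zero_of_translate (g : ℚ_[p] → ℂ) (s₀ : ℚ_[p]) (c : ℂ) (hc : c ≠ 1)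
    (hg : ∀ t, g (t + s₀) = c * g t) : ∫ t, g t ∂(haar p) = 0 := by
  have h1 : ∫ t, g (t + s₀) ∂(haar p) = ∫ t, g t ∂(haar p) :=
    integral_add_right_eq_self g s₀
  simp_rw [hg] at h1
  rw [integral_const_mul] at h1
  have h2 : (c - 1) * ∫ t, g t ∂(haar p) = 0 := by
    rw [sub_mul, one_mul, h1, sub_self]
  rcases mul_eq_zero.mp h2 with h | h
  · exact absurd (sub_eq_zero.mp h) hc
  · exact h

lemma fourierT_radial (Q₀ : ℚ_[p] → ℝ) (hrad : IsRadial p Q₀) {ξ ξ' : ℚ_[p]}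
    (h0 : ξ ≠ 0) (h0' : ξ' ≠ 0) (hn : ‖ξ‖ = ‖ξ'‖) :
    fourierT p (fun y => ((Q₀ y : ℝ) : ℂ)) ξ = fourierT p (fun y => ((Q₀ y : ℝ) : ℂ)) ξ' := by
  set a : ℚ_[p] := ξ⁻¹ * ξ' with hadef
  have ha : ‖a‖ = 1 := by
    rw [hadef, norm_mul, norm_inv, hn, inv_mul_cancel₀]
    exact norm_ne_zero_iff.mpr h0'
  have hmp := measurePreserving_mulLeft (p := p) ha
  have hemb : MeasurableEmbedding (fun t : ℚ_[p] => a * t) := by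
    have ha0 : a ≠ 0 := by
      intro h
      rw [h, norm_zero] at ha
      exact one_ne_zero ha.symm
    exact (Homeomorph.mulLeft₀ a ha0).measurableEmbedding
  rw [fourierT, fourierT, ← hmp.integral_comp hemb]
  congr 1
  funext t
  have h1 : ξ * (a * t) = ξ' * t := by
    rw [hadef]
    field_simp
  have h2 : Q₀ (a * t) = Q₀ t := hrad _ _ (by rw [norm_mul, ha, one_mul])
  rw [h1, h2]

/-- Indicator of the unit ball, complex valued. -/
noncomputable def indC {p : ℕ} [Fact p.Prime] (w : ℚ_[p]) : ℂ := if ‖w‖ ≤ 1 then 1 else 0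

lemma ballInd_eq_indC (w : ℚ_[p]) : ballInd p 0 0 w = indC w := by
  simp [ballInd, indC]

lemma indC_sub_one (w : ℚ_[p]) : indC (w - 1) = indC w := by
  unfold indC
  have h1 : ∀ v : ℚ_[p], ‖v‖ ≤ 1 → ‖v - 1‖ ≤ 1 := by
    intro v hv
    have := Padic.nonarchimedean v (-1 : ℚ_[p])
    simpa [sub_eq_add_neg] using le_trans this (by simp [hv])
  by_cases h : ‖w‖ ≤ 1
  · rw [if_pos h, if_pos (h1 w h)]
  · rw [if_neg h, if_neg]
    intro hcon
    have := h1 (w - 1) hcon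
    have h2 : ‖w‖ = ‖(w - 1) + 1‖ := by ring_nf
    have h3 := Padic.nonarchimedean (w - 1) (1 : ℚ_[p])
    rw [← h2] at h3
    exact h (le_trans h3 (by simp [hcon]))

lemma norm_indC_le (w : ℚ_[p]) : ‖indC w‖ ≤ 1 := by
  unfold indC
  split <;> simp

lemma measurable_indC_comp (u v : ℚ_[p]) :
    Measurable (fun t : ℚ_[p] => indC (u - v * t)) := by
  unfold indC
  refine Measurable.ite ?_ measurable_const measurable_const
  have : {t : ℚ_[p] | ‖u - v * t‖ ≤ 1}
      = (fun t : ℚ_[p] => ‖u - v * t‖) ⁻¹' Set.Iic 1 := rfl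
  rw [this]
  exact ((continuous_const.sub (continuous_mul_left v)).norm.measurable) measurableSet_Iic

lemma conv_wavelet (Q₀ : ℚ_[p] → ℝ) (hrad : IsRadial p Q₀)
    (hsupp : ∀ x : ℚ_[p], ¬ ‖x‖ ≤ 1 → Q₀ x = 0) (hint : Integrable Q₀ (haar p))
    (r : ℤ) (n : ℚ_[p]) (j : ℕ) (hj1 : 1 ≤ j) (hj2 : j ≤ p - 1)
    {ξ : ℚ_[p]} (hξ : ‖ξ‖ = (p : ℝ) ^ (1 - r)) (x : ℚ_[p]) :
    conv p Q₀ (wavelet p r n j) x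
      = fourierT p (fun y => ((Q₀ y : ℝ) : ℂ)) ξ * wavelet p r n j x := by
  have hpprime : p.Prime := Fact.out
  -- basic norms
  have hjnorm : ‖((j : ℕ) : ℚ_[p])‖ = 1 := by
    have hle : ‖((j : ℤ) : ℚ_[p])‖ ≤ 1 := Padic.norm_int_le_one _
    have hnd : ¬ ((p : ℤ) ∣ (j : ℤ)) := by
      rw [Int.natCast_dvd_natCast]
      intro hd
      have := Nat.le_of_dvd (by omega) hd
      omega
    have hlt : ¬ ‖((j : ℤ) : ℚ_[p])‖ < 1 := by
      rw [Padic.norm_intCast_lt_one_iff]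
      exact hnd
    push_cast at hle hlt ⊢
    linarith [lt_or_eq_of_le hle]
  set c : ℚ_[p] := (p : ℚ_[p])⁻¹ * (j : ℚ_[p]) with hcdef
  set u : ℚ_[p] := (p : ℚ_[p]) ^ r * x - n with hudef
  set ξ₀ : ℚ_[p] := -(c * (p : ℚ_[p]) ^ r) with hksidef
  set s₀ : ℚ_[p] := (p : ℚ_[p]) ^ (-r) with hsdef
  have hcn : ‖c‖ = (p : ℝ) := by
    rw [hcdef, norm_mul, norm_inv, Padic.norm_p, hjnorm, inv_inv, mul_one]
  have hξ₀n : ‖ξ₀‖ = (p : ℝ) ^ (1 - r) := by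
    rw [hksidef, norm_neg, norm_mul, hcn, Padic.norm_p_zpow,
      show (1 : ℤ) - r = 1 + (-r) by ring, zpow_add₀ (ne_of_gt pR_pos), zpow_one]
  have hppow_pos : ∀ m : ℤ, (0:ℝ) < (p:ℝ) ^ m := fun m => zpow_pos pR_pos m
  have hξ₀0 : ξ₀ ≠ 0 := by
    intro h
    have := hξ₀n
    rw [h, norm_zero] at this
    exact absurd this.symm (ne_of_gt (hppow_pos _))
  have hξ0 : ξ ≠ 0 := by
    intro h
    rw [h, norm_zero] at hξ
    exact absurd hξ.symm (ne_of_gt (hppow_pos _))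
  have hs₀n : ‖s₀‖ = (p : ℝ) ^ r := by
    rw [hsdef, Padic.norm_p_zpow, neg_neg]
  have hps₀ : (p : ℚ_[p]) ^ r * s₀ = 1 := by
    rw [hsdef, ← zpow_add₀ pQ_ne_zero, add_neg_cancel, zpow_zero]
  have hξ₀s₀ : ¬ ‖ξ₀ * s₀‖ ≤ 1 := by
    rw [norm_mul, hξ₀n, hs₀n, ← zpow_add₀ (ne_of_gt pR_pos),
      show (1 : ℤ) - r + r = 1 by ring, zpow_one]
    push_neg
    exact pR_one_lt
  set e : ℂ := stdChar p (ξ₀ * s₀) with hedef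
  have he1 : e ≠ 1 := stdChar_ne_one hξ₀s₀
  -- the wavelet in convenient form
  have hwav : ∀ z : ℚ_[p], wavelet p r n j z
      = (((p : ℝ) ^ (-(r : ℝ) / 2) : ℝ) : ℂ)
          * stdChar p (c * ((p : ℚ_[p]) ^ r * z - n)) * indC ((p : ℚ_[p]) ^ r * z - n) := by
    intro z
    rw [wavelet, ballInd_eq_indC]
  set C : ℂ := (((p : ℝ) ^ (-(r : ℝ) / 2) : ℝ) : ℂ) with hCdef
  -- translation invariance of the indicator factor
  have hindtrans : ∀ t : ℚ_[p],
      indC (u - (p : ℚ_[p]) ^ r * (t + s₀)) = indC (u - (p : ℚ_[p]) ^ r * t) := by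
    intro t
    have : u - (p : ℚ_[p]) ^ r * (t + s₀) = (u - (p : ℚ_[p]) ^ r * t) - 1 := by
      rw [mul_add, hps₀]
      ring
    rw [this, indC_sub_one]
  -- radial invariance under translation by s₀ for "large" t
  have hQbig : ∀ t : ℚ_[p], 1 < ‖(p : ℚ_[p]) ^ r * t‖ → Q₀ (t + s₀) = Q₀ t := by
    intro t ht
    have htn : ‖t‖ = (p : ℝ) ^ r * ‖(p : ℚ_[p]) ^ r * t‖ := by
      rw [norm_mul, Padic.norm_p_zpow, ← mul_assoc, ← zpow_add₀ (ne_of_gt pR_pos),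
        add_neg_cancel, zpow_zero, one_mul]
    have hts : ‖s₀‖ < ‖t‖ := by
      rw [hs₀n, htn]
      nlinarith [hppow_pos r]
    apply hrad
    rw [Padic.add_eq_max_of_ne (ne_of_lt hts).symm]
    exact max_eq_left (le_of_lt hts)
  -- step 1: rewrite the convolution via the substitution y ↦ x - t
  have hstep1 : conv p Q₀ (wavelet p r n j) x
      = ∫ t, ((Q₀ t : ℝ) : ℂ) * wavelet p r n j (x - t) ∂(haar p) := by
    rw [conv]
    have := integral_sub_left_eq_self
      (fun t : ℚ_[p] => ((Q₀ t : ℝ) : ℂ) * wavelet p r n j (x - t)) (haar p) x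
    rw [← this]
    congr 1
    funext y
    rw [sub_sub_cancel]
  -- step 2: pointwise expansion of the integrand
  have hpt : ∀ t : ℚ_[p], ((Q₀ t : ℝ) : ℂ) * wavelet p r n j (x - t)
      = (C * stdChar p (c * u))
          * (stdChar p (ξ₀ * t) * indC (u - (p : ℚ_[p]) ^ r * t) * ((Q₀ t : ℝ) : ℂ)) := by
    intro t
    rw [hwav]
    have h1 : (p : ℚ_[p]) ^ r * (x - t) - n = u - (p : ℚ_[p]) ^ r * t := by
      rw [hudef]
      ring
    rw [h1]
    have h2 : c * (u - (p : ℚ_[p]) ^ r * t) = c * u + ξ₀ * t := by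
      rw [hksidef]
      ring
    rw [h2, stdChar_add]
    rw [hCdef]
    ring
  have hstep2 : conv p Q₀ (wavelet p r n j) x
      = (C * stdChar p (c * u))
          * ∫ t, stdChar p (ξ₀ * t) * indC (u - (p : ℚ_[p]) ^ r * t) * ((Q₀ t : ℝ) : ℂ)
              ∂(haar p) := by
    rw [hstep1]
    simp_rw [hpt]
    rw [integral_const_mul]
  -- integrability facts
  have hQint : Integrable (fun t : ℚ_[p] => ((Q₀ t : ℝ) : ℂ)) (haar p) := hint.ofReal
  have hmeas_char : Measurable (fun t : ℚ_[p] => stdChar p (ξ₀ * t)) :=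
    (stdChar_continuous.comp (continuous_mul_left ξ₀)).measurable
  have hF2int : Integrable
      (fun t : ℚ_[p] => stdChar p (ξ₀ * t) * indC (u - (p : ℚ_[p]) ^ r * t) * ((Q₀ t : ℝ) : ℂ))
      (haar p) := by
    apply Integrable.bdd_mul hQint
    · exact (hmeas_char.mul (measurable_indC_comp u _)).aestronglyMeasurable
    · refine ae_of_all _ (fun t => ?_)
      rw [norm_mul, norm_stdChar, one_mul]
      exact norm_indC_le _
  have hF1int : Integrable
      (fun t : ℚ_[p] => stdChar p (ξ₀ * t) * ((Q₀ t : ℝ) : ℂ)) (haar p) := by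
    apply Integrable.bdd_mul hQint
    · exact hmeas_char.aestronglyMeasurable
    · exact ae_of_all _ (fun t => le_of_eq (norm_stdChar _))
  by_cases hu1 : ‖u‖ ≤ 1
  · -- x is in the support ball of the wavelet
    have hwx : wavelet p r n j x = C * stdChar p (c * u) := by
      rw [hwav x, indC, if_pos hu1, mul_one]
    -- the complementary oscillating integral vanishes
    set g : ℚ_[p] → ℂ := fun t =>
      stdChar p (ξ₀ * t) * (1 - indC (u - (p : ℚ_[p]) ^ r * t)) * ((Q₀ t : ℝ) : ℂ) with hgdef
    have hgzero : ∫ t, g t ∂(haar p) = 0 := by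
      apply integral_eq_zero_of_translate g s₀ e he1
      intro t
      rw [hgdef]
      simp only
      rw [mul_add ξ₀ t s₀, stdChar_add, hindtrans t, ← hedef]
      have hQ : (1 - indC (u - (p : ℚ_[p]) ^ r * t)) * ((Q₀ (t + s₀) : ℝ) : ℂ)
          = (1 - indC (u - (p : ℚ_[p]) ^ r * t)) * ((Q₀ t : ℝ) : ℂ) := by
        by_cases hw : ‖u - (p : ℚ_[p]) ^ r * t‖ ≤ 1
        · rw [indC, if_pos hw, sub_self, zero_mul, zero_mul]
        · have hlarge : 1 < ‖(p : ℚ_[p]) ^ r * t‖ := by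
            push_neg at hw
            have heq : (p : ℚ_[p]) ^ r * t = u + -(u - (p : ℚ_[p]) ^ r * t) := by ring
            rw [heq, Padic.add_eq_max_of_ne, norm_neg]
            · exact lt_max_of_lt_right hw
            · rw [norm_neg]
              exact ne_of_lt (lt_of_le_of_lt hu1 hw)
          rw [hQbig t hlarge]
      linear_combination (stdChar p (ξ₀ * t) * e) * hQ
    have hJ : ∫ t, stdChar p (ξ₀ * t) * indC (u - (p : ℚ_[p]) ^ r * t) * ((Q₀ t : ℝ) : ℂ)
          ∂(haar p)
        = fourierT p (fun y => ((Q₀ y : ℝ) : ℂ)) ξ₀ := by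
      rw [fourierT]
      have hsplit : ∀ t : ℚ_[p], stdChar p (ξ₀ * t) * ((Q₀ t : ℝ) : ℂ)
          = stdChar p (ξ₀ * t) * indC (u - (p : ℚ_[p]) ^ r * t) * ((Q₀ t : ℝ) : ℂ) + g t := by
        intro t
        rw [hgdef]
        ring
      have : ∫ t, stdChar p (ξ₀ * t) * ((Q₀ t : ℝ) : ℂ) ∂(haar p)
          = (∫ t, stdChar p (ξ₀ * t) * indC (u - (p : ℚ_[p]) ^ r * t) * ((Q₀ t : ℝ) : ℂ)
              ∂(haar p)) + ∫ t, g t ∂(haar p) := by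
        rw [← integral_add hF2int]
        · simp_rw [← hsplit]
        · have : g = fun t => stdChar p (ξ₀ * t) * ((Q₀ t : ℝ) : ℂ)
              - stdChar p (ξ₀ * t) * indC (u - (p : ℚ_[p]) ^ r * t) * ((Q₀ t : ℝ) : ℂ) := by
            funext t
            rw [hgdef]
            ring
          rw [this]
          exact hF1int.sub hF2int
      rw [this, hgzero, add_zero]
    have hrade : fourierT p (fun y => ((Q₀ y : ℝ) : ℂ)) ξ₀
        = fourierT p (fun y => ((Q₀ y : ℝ) : ℂ)) ξ :=
      fourierT_radial Q₀ hrad hξ₀0 hξ0 (by rw [hξ₀n, hξ])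
    rw [hstep2, hJ, hrade, hwx]
    ring
  · -- x is outside the support ball: both sides vanish
    have hwx : wavelet p r n j x = 0 := by
      rw [hwav x, indC, if_neg hu1, mul_zero]
    rw [hstep2, hwx, mul_zero]
    have hJ0 : ∫ t, stdChar p (ξ₀ * t) * indC (u - (p : ℚ_[p]) ^ r * t) * ((Q₀ t : ℝ) : ℂ)
        ∂(haar p) = 0 := by
      apply integral_eq_zero_of_translate _ s₀ e he1
      intro t
      rw [mul_add ξ₀ t s₀, stdChar_add, hindtrans t, ← hedef]
      have hQ : indC (u - (p : ℚ_[p]) ^ r * t) * ((Q₀ (t + s₀) : ℝ) : ℂ)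
          = indC (u - (p : ℚ_[p]) ^ r * t) * ((Q₀ t : ℝ) : ℂ) := by
        by_cases hw : ‖u - (p : ℚ_[p]) ^ r * t‖ ≤ 1
        · have hlarge : 1 < ‖(p : ℚ_[p]) ^ r * t‖ := by
            push_neg at hu1
            have heq : (p : ℚ_[p]) ^ r * t = u + -(u - (p : ℚ_[p]) ^ r * t) := by ring
            rw [heq, Padic.add_eq_max_of_ne]
            · exact lt_max_of_lt_left hu1
            · rw [norm_neg]
              exact (ne_of_lt (lt_of_le_of_lt hw hu1)).symm
          rw [hQbig t hlarge]
        · rw [indC, if_neg hw, zero_mul, zero_mul]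
      linear_combination (stdChar p (ξ₀ * t) * e) * hQ
    rw [hJ0, mul_zero]

lemma fitness_mul_wavelet (M : ℕ) (G : Finset ℚ_[p])
    (hGsub : ∀ I ∈ G, ‖I‖ ≤ 1)
    (hG : ∀ x : ℚ_[p], ‖x‖ ≤ 1 → ∃! I : ℚ_[p], I ∈ G ∧ ‖x - I‖ ≤ (p : ℝ) ^ (-(M : ℤ)))
    (fc : ℚ_[p] → ℝ) (I : {I : ℚ_[p] // I ∈ G}) (r : ℤ) (n : ℚ_[p]) (j : ℕ)
    (hsuppw : Function.support (wavelet p r n j) ⊆ ballSet p M I.1) :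
    (fun y => ((fitness p fc M G y : ℝ) : ℂ) * wavelet p r n j y)
      = fun y => ((fc I.1 : ℝ) : ℂ) * wavelet p r n j y := by
  funext y
  by_cases hy : wavelet p r n j y = 0
  · rw [hy, mul_zero, mul_zero]
  · have hyI : ‖y - I.1‖ ≤ (p : ℝ) ^ (-(M : ℤ)) := hsuppw hy
    have hpM : (p : ℝ) ^ (-(M : ℤ)) ≤ 1 := by
      have := zpow_le_zpow_right₀ (le_of_lt (pR_one_lt (p := p))) (by omega : -(M:ℤ) ≤ 0)
      simpa using this
    have hy1 : ‖y‖ ≤ 1 := by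
      have h1 : y = (y - I.1) + I.1 := by ring
      rw [h1]
      refine le_trans (Padic.nonarchimedean _ _) (max_le ?_ (hGsub I.1 I.2))
      exact le_trans hyI hpM
    obtain ⟨J, ⟨hJG, hJb⟩, hJuniq⟩ := hG y hy1
    have hIJ : I.1 = J := hJuniq I.1 ⟨I.2, hyI⟩
    have hfit : fitness p fc M G y = fc I.1 := by
      rw [fitness]
      rw [Finset.sum_eq_single_of_mem I.1 I.2]
      · rw [ballIndR, if_pos hyI, mul_one]
      · intro b hbG hbne
        rw [ballIndR, if_neg, mul_zero]
        intro hb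
        exact hbne (by rw [hJuniq b ⟨hbG, hb⟩, ← hIJ])
    rw [hfit]

end Aux

/-- A Kozyrev wavelet supported in a ball `I + p^Mℤ_p`, `I ∈ G_M`, is an
eigenfunction of `W₀ φ = Q₀ ∗ (f φ)` with eigenvalue `Q̂₀(p^{1-r}) f(I)`. -/
theorem Wop_wavelet_eigenfunction (p : ℕ) [Fact p.Prime] (Q₀ : ℚ_[p] → ℝ)
    (hpos : ∀ x : ℚ_[p], 0 ≤ Q₀ x)
    (hrad : IsRadial p Q₀)
    (hsupp : ∀ x : ℚ_[p], ¬ ‖x‖ ≤ 1 → Q₀ x = 0)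
    (hint : Integrable Q₀ (haar p))
    (hone : ∫ x in unitBall p, Q₀ x ∂(haar p) = 1)
    (M : ℕ) (hM : 1 ≤ M) (G : Finset ℚ_[p])
    (hGsub : ∀ I ∈ G, ‖I‖ ≤ 1)
    (hG : ∀ x : ℚ_[p], ‖x‖ ≤ 1 → ∃! I : ℚ_[p], I ∈ G ∧ ‖x - I‖ ≤ (p : ℝ) ^ (-(M : ℤ)))
    (fc : ℚ_[p] → ℝ) (hfc : ∀ I ∈ G, 0 < fc I)
    (I : {I : ℚ_[p] // I ∈ G}) (r : ℤ) (n : ℚ_[p]) (j : ℕ) (hj1 : 1 ≤ j) (hj2 : j ≤ p - 1)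
    (hsuppw : Function.support (wavelet p r n j) ⊆ ballSet p M I.1) :
    ∀ ξ : ℚ_[p], ‖ξ‖ = (p : ℝ) ^ (1 - r) →
      ∀ x : ℚ_[p],
        Wop p Q₀ fc M G (wavelet p r n j) x =
          fourierT p (fun y => (Q₀ y : ℂ)) ξ * (fc I.1 : ℂ) * wavelet p r n j x := by
  intro ξ hξ x
  have hfun := fitness_mul_wavelet M G hGsub hG fc I r n j hsuppw
  rw [Wop, hfun]
  have hconst : conv p Q₀ (fun y => ((fc I.1 : ℝ) : ℂ) * wavelet p r n j y) x
      = ((fc I.1 : ℝ) : ℂ) * conv p Q₀ (wavelet p r n j) x := by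
    rw [conv, conv, ← integral_const_mul]
    congr 1
    funext y
    ring
  rw [hconst, conv_wavelet Q₀ hrad hsupp hint r n j hj1 hj2 hξ x]
  ring


end PadicES
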